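/- arXiv:math/0510457 — 2 statements merged into one kernel-verified Lean document; each statement's English description precedes it below -/
import Mathlib

section
/- Let λ be an r-partition of n with (λ,1) ∈ Ω (i.e., there exists an r-composition μ with 𝐚(λ) > 𝐚(μ)), let l be the smallest index with |λ^(l)| ≠ 0, and define λ† by λ†^(l) = (1^{|λ^(l)|−1}), λ†^(l+1) = (1^{|λ^(l+1)|+1}), λ†^(j) = (1^{|λ^(j)|}) for j ≠ l, l+1. Then λ† is an r-partition of n and 𝐚(λ) > 𝐚(λ†). -/
/-- An `r`-composition: an `r`-tuple of compositions (finite sequences of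
non-negative integers), the `i`-th component being the list of parts of `λ^(i)`. -/
abbrev MultiComp (r : ℕ) := Fin r → List ℕ

namespace MultiComp

variable {r : ℕ}

/-- `|λ^(i)|`, the size of the `i`-th component. -/
def sizeAt (lam : MultiComp r) (i : Fin r) : ℕ := (lam i).sum

/-- `|λ| = |λ^(1)| + ⋯ + |λ^(r)|`. -/
def totalSize (lam : MultiComp r) : ℕ := ∑ i, lam.sizeAt i

/-- `𝐚(λ) = (a_1, …, a_r)` with `a_i = Σ_{k < i} |λ^(k)|`. -/
def avec (lam : MultiComp r) (i : Fin r) : ℕ := ∑ k ∈ Finset.Iio i, lam.sizeAt k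

/-- The type `α(λ) = (|λ^(1)|, …, |λ^(r)|)` of an `r`-composition. -/
def alphaType (lam : MultiComp r) : Fin r → ℕ := lam.sizeAt

/-- The dominance order `λ ⊵ μ` on `r`-compositions:
`Σ_{c=1}^{s−1}|λ^(c)| + Σ_{j=1}^{i} λ_j^(s) ≥ Σ_{c=1}^{s−1}|μ^(c)| + Σ_{j=1}^{i} μ_j^(s)`
for all `1 ≤ s ≤ r` and all `i`. -/
def Dominates (lam mu : MultiComp r) : Prop :=
  ∀ (s : Fin r) (i : ℕ),
    mu.avec s + ((mu s).take i).sum ≤ lam.avec s + ((lam s).take i).sum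

/-- An `r`-partition: every component is weakly decreasing. -/
def IsMultiPartition (lam : MultiComp r) : Prop :=
  ∀ i : Fin r, (lam i).Pairwise (· ≥ ·)

/-- `𝐚(λ) > 𝐚(μ)`: componentwise `≥` and not equal. -/
def AvecGT (lam mu : MultiComp r) : Prop :=
  (∀ i, mu.avec i ≤ lam.avec i) ∧ lam.avec ≠ mu.avec

end MultiComp

lemma replicate_sorted (m : ℕ) : (List.replicate m 1).Pairwise (· ≥ ·) := by
  induction m with
  | zero => simp
  | succ k ih =>
    rw [List.replicate_succ]
    refine List.Pairwise.cons ?_ ih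
    intro b hb
    rw [List.eq_of_mem_replicate hb]

/-- Let `λ` be an `r`-partition of `n` such that `(λ,1) ∈ Ω`,
i.e. there exists an `r`-composition `μ` (of `n`) with `𝐚(λ) > 𝐚(μ)`.  Let `l`
be the smallest index with `|λ^(l)| ≠ 0` (the Ω-condition forces `l + 1 < r`,
which we record as a hypothesis), and let `λ†` be defined by
`λ†^(l) = (1^{|λ^(l)|−1})`, `λ†^(l+1) = (1^{|λ^(l+1)|+1})` and
`λ†^(j) = (1^{|λ^(j)|})` for `j ≠ l, l+1`.  Then `λ†` is an `r`-partition of `n`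
and `𝐚(λ) > 𝐚(λ†)`. -/
theorem dagger_isMultiPartition_and_avecGT {r n : ℕ} (lam : MultiComp r)
    (hpart : lam.IsMultiPartition) (hsize : lam.totalSize = n)
    (hΩ : ∃ mu : MultiComp r, mu.totalSize = n ∧ lam.AvecGT mu)
    (l : Fin r) (hl : lam.sizeAt l ≠ 0) (hlmin : ∀ k, lam.sizeAt k ≠ 0 → l ≤ k)
    (hl1 : (l : ℕ) + 1 < r)
    (dag : MultiComp r)
    (hdag : ∀ j : Fin r,
      dag j =
        if j = l then List.replicate (lam.sizeAt l - 1) 1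
        else if (j : ℕ) = (l : ℕ) + 1 then List.replicate (lam.sizeAt j + 1) 1
        else List.replicate (lam.sizeAt j) 1) :
    dag.IsMultiPartition ∧ dag.totalSize = n ∧ lam.AvecGT dag := by
  have hsz1 : 1 ≤ lam.sizeAt l := Nat.one_le_iff_ne_zero.mpr hl
  set l1 : Fin r := ⟨(l:ℕ)+1, hl1⟩ with hl1def
  have hne : l1 ≠ l := by
    intro h
    have := congrArg Fin.val h
    simp [l1] at this
  have hdsz : ∀ j, dag.sizeAt j + (if j = l then 1 else 0)
      = lam.sizeAt j + (if j = l1 then 1 else 0) := by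
    intro j
    by_cases h1 : j = l
    · rw [MultiComp.sizeAt, MultiComp.sizeAt, hdag j, if_pos h1, h1, if_neg hne.symm]
      simp [MultiComp.sizeAt, List.sum_replicate]
      have hsz1' : 1 ≤ (lam l).sum := hsz1
      omega
    · by_cases h2 : j = l1
      · have hv : (j:ℕ) = (l:ℕ)+1 := by rw [h2]
        rw [MultiComp.sizeAt, MultiComp.sizeAt, hdag j, if_neg h1, if_pos hv,
          if_neg h1, if_pos h2]
        simp [MultiComp.sizeAt, List.sum_replicate]
      · have h3 : (j:ℕ) ≠ (l:ℕ)+1 := by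
          intro h
          exact h2 (Fin.ext h)
        simp only [MultiComp.sizeAt, hdag j, if_neg h1, if_neg h3, if_neg h2]
        simp [List.sum_replicate]
  have hpart' : dag.IsMultiPartition := by
    intro j
    rw [hdag j]
    split
    · exact replicate_sorted _
    · split
      · exact replicate_sorted _
      · exact replicate_sorted _
  have htot : dag.totalSize = n := by
    have := Finset.sum_congr rfl (fun k (_ : k ∈ Finset.univ) => hdsz k)
    rw [Finset.sum_add_distrib, Finset.sum_add_distrib,
      Finset.sum_ite_eq' Finset.univ l (fun _ => 1),
      Finset.sum_ite_eq' Finset.univ l1 (fun _ => 1)] at this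
    simp only [Finset.mem_univ, if_pos] at this
    have h4 : dag.totalSize = lam.totalSize := by
      simpa [MultiComp.totalSize] using this
    rw [h4, hsize]
  have havec : ∀ s : Fin r, dag.avec s + (if l ∈ Finset.Iio s then 1 else 0)
      = lam.avec s + (if l1 ∈ Finset.Iio s then 1 else 0) := by
    intro s
    have := Finset.sum_congr rfl (fun k (_ : k ∈ Finset.Iio s) => hdsz k)
    rw [Finset.sum_add_distrib, Finset.sum_add_distrib,
      Finset.sum_ite_eq' (Finset.Iio s) l (fun _ => 1),
      Finset.sum_ite_eq' (Finset.Iio s) l1 (fun _ => 1)] at this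
    exact this
  have hll1 : l < l1 := by
    simp [Fin.lt_def, l1]
  refine ⟨hpart', htot, ?_, ?_⟩
  · intro s
    have h := havec s
    by_cases hs1 : l1 ∈ Finset.Iio s
    · have hs2 : l ∈ Finset.Iio s := by
        simp only [Finset.mem_Iio] at hs1 ⊢
        exact lt_trans hll1 hs1
      rw [if_pos hs1, if_pos hs2] at h
      omega
    · rw [if_neg hs1] at h
      split at h <;> omega
  · intro heq
    have h := havec l1
    have hs2 : l ∈ Finset.Iio l1 := Finset.mem_Iio.mpr hll1
    have hs1 : l1 ∉ Finset.Iio l1 := by simp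
    rw [if_pos hs2, if_neg hs1, congrFun heq l1] at h
    omega
end

section
/- Let A be a standardly based R-algebra on a poset Λ over a field R, let λ ∈ Λ, and suppose the bilinear form ⟨·,·⟩ on the cell module Z^λ is nonzero. Then rad Z^λ is the unique maximal proper A-submodule of Z^λ, and L^λ = Z^λ / rad Z^λ is an absolutely irreducible A-module. -/
open Finset

/-- A **standardly based algebra** on a poset `Λ` in the sense of Du–Rui:
an `R`-algebra `A` equipped with a basis
`⋃_{λ∈Λ} {a^λ_{ij} : (i,j) ∈ I(λ) × J(λ)}` such that one-sided multiplication
is triangular modulo the span `A(>λ)` of basis elements of strictly larger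
index, with structure constants independent of the other tableau. -/
structure StandardlyBasedAlgebra (R : Type*) [CommRing R] (A : Type*) [Ring A]
    [Algebra R A] (Λ : Type*) [PartialOrder Λ] where
  /-- the index set `I(λ)` -/
  I : Λ → Type*
  /-- the index set `J(λ)` -/
  J : Λ → Type*
  [finI : ∀ l, Fintype (I l)]
  [finJ : ∀ l, Fintype (J l)]
  /-- the standard basis `a^λ_{ij}` -/
  bas : Module.Basis (Σ l : Λ, I l × J l) R A
  /-- left structure constants `f_{i',λ}(a,i)` -/
  fL : A → ∀ l : Λ, I l → I l → R
  /-- right structure constants `f_{λ,j'}(j,a)` -/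
  fR : ∀ l : Λ, J l → A → J l → R
  /-- `a · a^λ_{ij} ≡ Σ_{i'} f_{i',λ}(a,i) a^λ_{i'j} mod A(>λ)`,
  with coefficients independent of `j`. -/
  left_rule : ∀ (a : A) (l : Λ) (i : I l) (j : J l),
    a * bas ⟨l, (i, j)⟩ - ∑ i' : I l, fL a l i i' • bas ⟨l, (i', j)⟩ ∈
      Submodule.span R {x : A | ∃ m : Λ, l < m ∧ ∃ i'' j'', x = bas ⟨m, (i'', j'')⟩}
  /-- `a^λ_{ij} · a ≡ Σ_{j'} f_{λ,j'}(j,a) a^λ_{ij'} mod A(>λ)`,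
  with coefficients independent of `i`. -/
  right_rule : ∀ (a : A) (l : Λ) (i : I l) (j : J l),
    bas ⟨l, (i, j)⟩ * a - ∑ j' : J l, fR l j a j' • bas ⟨l, (i, j')⟩ ∈
      Submodule.span R {x : A | ∃ m : Λ, l < m ∧ ∃ i'' j'', x = bas ⟨m, (i'', j'')⟩}
  /-- the bilinear structure function `f_λ : J(λ) × I(λ) → R`, determined by
  `a^λ_{ij} a^λ_{i'j'} ≡ f_λ(j,i') a^λ_{ij'} mod A(>λ)`. -/
  f : ∀ l : Λ, J l → I l → R
  f_rule : ∀ (l : Λ) (i : I l) (j : J l) (i' : I l) (j' : J l),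
    bas ⟨l, (i, j)⟩ * bas ⟨l, (i', j')⟩ - f l j i' • bas ⟨l, (i, j')⟩ ∈
      Submodule.span R {x : A | ∃ m : Λ, l < m ∧ ∃ i'' j'', x = bas ⟨m, (i'', j'')⟩}

namespace StandardlyBasedAlgebra

attribute [instance] finI finJ

variable {R : Type*} [CommRing R] {A : Type*} [Ring A] [Algebra R A]
  {Λ : Type*} [PartialOrder Λ]
variable (D : StandardlyBasedAlgebra R A Λ)

/-- The cell module `Z^λ`: the free `R`-module on `J(λ)` (an element is a
coefficient function `J(λ) → R`). -/
abbrev Cell (l : Λ) := D.J l → R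

/-- The right `A`-action on the cell module: `z_j · a = Σ_{j'} f_{λ,j'}(j,a) z_{j'}`. -/
def cellAct {l : Λ} (x : D.Cell l) (a : A) : D.Cell l :=
  fun j' => ∑ j : D.J l, x j * D.fR l j a j'

/-- The bilinear form on the cell module, determined by `⟨z_j, z_{j'}⟩ = f_λ(j, j')`
(via an identification `e` of `J(λ)` with (part of) `I(λ)`). -/
def cellForm {l : Λ} (e : D.J l → D.I l) (x y : D.Cell l) : R :=
  ∑ j : D.J l, ∑ j' : D.J l, x j * y j' * D.f l j (e j')

/-- The radical `rad Z^λ = {x : ⟨x,y⟩ = 0 for all y}` of the bilinear form on `Z^λ`. -/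
def cellRad (l : Λ) (e : D.J l → D.I l) : Set (D.Cell l) :=
  {x | ∀ y : D.Cell l, D.cellForm e x y = 0}

/-- A subset of the cell module that is a (right) `A`-submodule: closed under
zero, addition, `R`-scalars and the `A`-action. -/
def IsCellSubmodule {l : Λ} (N : Set (D.Cell l)) : Prop :=
  (0 : D.Cell l) ∈ N ∧ (∀ x ∈ N, ∀ y ∈ N, x + y ∈ N) ∧
    (∀ (c : R), ∀ x ∈ N, c • x ∈ N) ∧ ∀ x ∈ N, ∀ a : A, D.cellAct x a ∈ N

end StandardlyBasedAlgebra

section Lemmas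

open scoped Classical

variable {R : Type*} [CommRing R] {A : Type*} [Ring A] [Algebra R A]
  {Λ : Type*} [PartialOrder Λ]
variable (D : StandardlyBasedAlgebra R A Λ)

lemma coeff_zero (l : Λ) (i : D.I l) (c : D.J l → R)
    (h : (∑ j' : D.J l, c j' • D.bas ⟨l, (i, j')⟩) ∈
      Submodule.span R {x : A | ∃ m : Λ, l < m ∧ ∃ i'' j'', x = D.bas ⟨m, (i'', j'')⟩})
    (j'' : D.J l) : c j'' = 0 := by
  have hker : Submodule.span R {x : A | ∃ m : Λ, l < m ∧ ∃ i'' j'', x = D.bas ⟨m, (i'', j'')⟩}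
      ≤ LinearMap.ker (D.bas.coord ⟨l, (i, j'')⟩) := by
    rw [Submodule.span_le]
    rintro _ ⟨m, hm, i1, j1, rfl⟩
    simp only [SetLike.mem_coe, LinearMap.mem_ker, Module.Basis.coord_apply, Module.Basis.repr_self]
    rw [Finsupp.single_eq_of_ne]
    intro hEq
    exact absurd (congrArg Sigma.fst hEq) (ne_of_lt hm)
  have h0 := hker h
  simp only [LinearMap.mem_ker, map_sum, map_smul, Module.Basis.coord_apply, Module.Basis.repr_self] at h0
  rw [Finset.sum_eq_single j''] at h0
  · simpa using h0
  · intro b _ hb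
    rw [Finsupp.single_eq_of_ne, smul_zero]
    intro hEq
    exact hb (Prod.mk.injEq _ _ _ _ ▸ eq_of_heq (Sigma.mk.inj_iff.mp hEq).2).2.symm
  · simp


lemma fR_bas (l : Λ) (i : D.I l) (j j₀ j' : D.J l) :
    D.fR l j (D.bas ⟨l, (i, j₀)⟩) j' = if j' = j₀ then D.f l j i else 0 := by
  have h1 := D.right_rule (D.bas ⟨l, (i, j₀)⟩) l i j
  have h2 := D.f_rule l i j i j₀
  have h3 := Submodule.sub_mem _ h1 h2
  have key : (∑ j' : D.J l,
      (D.fR l j (D.bas ⟨l, (i, j₀)⟩) j' - if j' = j₀ then D.f l j i else 0) •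
        D.bas ⟨l, (i, j')⟩) ∈
      Submodule.span R {x : A | ∃ m : Λ, l < m ∧ ∃ i'' j'', x = D.bas ⟨m, (i'', j'')⟩} := by
    have := Submodule.neg_mem _ h3
    convert this using 1
    simp only [sub_smul, Finset.sum_sub_distrib, ite_smul, zero_smul,
      Finset.sum_ite_eq', Finset.mem_univ, if_true]
    abel
  have := coeff_zero D l i _ key j'
  exact sub_eq_zero.mp this

lemma cellAct_bas (l : Λ) (x : D.Cell l) (i : D.I l) (j₀ : D.J l) :
    D.cellAct x (D.bas ⟨l, (i, j₀)⟩) =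
      fun j' => if j' = j₀ then ∑ j, x j * D.f l j i else 0 := by
  funext j'
  simp only [StandardlyBasedAlgebra.cellAct, fR_bas, mul_ite, mul_zero]
  split_ifs with h
  · rfl
  · simp

end Lemmas

section Lemmas2

open scoped Classical

variable {R : Type*} [Field R] {A : Type*} [Ring A] [Algebra R A]
  {Λ : Type*} [PartialOrder Λ]
variable (D : StandardlyBasedAlgebra R A Λ)

lemma cell_gen (l : Λ) (N : Set (D.Cell l)) (hN : D.IsCellSubmodule N)
    (x : D.Cell l) (hx : x ∈ N) (i : D.I l) (hc : (∑ j, x j * D.f l j i) ≠ 0) :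
    ∀ w : D.Cell l, w ∈ N := by
  intro w
  set c : R := ∑ j, x j * D.f l j i with hcdef
  have hw : w = ∑ j₀ : D.J l, (w j₀ * c⁻¹) • D.cellAct x (D.bas ⟨l, (i, j₀)⟩) := by
    funext j'
    simp only [Finset.sum_apply, Pi.smul_apply, cellAct_bas, smul_eq_mul, mul_ite, mul_zero]
    rw [Finset.sum_eq_single j']
    · rw [if_pos rfl]
      field_simp
      rfl
    · intro b _ hb
      rw [if_neg (Ne.symm hb)]
    · simp
  rw [hw]
  refine Finset.sum_induction _ (· ∈ N) (fun a b ha hb => hN.2.1 a ha b hb) hN.1 ?_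
  intro j₀ _
  exact hN.2.2.1 _ _ (hN.2.2.2 x hx _)

lemma form_decomp (l : Λ) (e : D.J l → D.I l) (x y : D.Cell l) :
    D.cellForm e x y = ∑ j' : D.J l, y j' * ∑ j : D.J l, x j * D.f l j (e j') := by
  rw [StandardlyBasedAlgebra.cellForm, Finset.sum_comm]
  refine Finset.sum_congr rfl fun j' _ => ?_
  rw [Finset.mul_sum]
  exact Finset.sum_congr rfl fun j _ => by ring

lemma form_exists (l : Λ) (e : D.J l → D.I l) (x y : D.Cell l)
    (h : D.cellForm e x y ≠ 0) : ∃ j' : D.J l, (∑ j : D.J l, x j * D.f l j (e j')) ≠ 0 := by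
  by_contra hc
  push_neg at hc
  apply h
  rw [form_decomp]
  simp [hc]

end Lemmas2

/-- Let `A` be a standardly based algebra on a poset `Λ` over a
field `R`, `λ ∈ Λ`, and suppose the bilinear form on the cell module `Z^λ` is
nonzero.  Then `rad Z^λ` is the unique maximal proper `A`-submodule of `Z^λ`,
and `L^λ = Z^λ / rad Z^λ` is an absolutely irreducible `A`-module (nonzero,
irreducible, with only scalar endomorphisms). -/
theorem cellRad_unique_maximal_and_quotient_absolutely_irreducible
    {R : Type*} [Field R] {A : Type*} [Ring A] [Algebra R A]
    {Λ : Type*} [PartialOrder Λ]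
    (D : StandardlyBasedAlgebra R A Λ) (l : Λ) (e : D.J l → D.I l)
    (hform : ∃ x y : D.Cell l, D.cellForm e x y ≠ 0) :
    D.cellRad l e ≠ Set.univ ∧
    (∀ N : Set (D.Cell l), D.IsCellSubmodule N → N ≠ Set.univ → N ⊆ D.cellRad l e) ∧
    -- `L^λ = Z^λ / rad Z^λ` is absolutely irreducible: for any realization of the
    -- quotient as an `R`-module with compatible `A`-action, it is nonzero, has no
    -- proper nonzero `A`-stable subspaces, and all `A`-endomorphisms are scalars.
    (∀ (L : Type*) [AddCommGroup L] [Module R L]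
      (p : (D.Cell l) →ₗ[R] L), Function.Surjective p →
      (∀ x : D.Cell l, p x = 0 ↔ x ∈ D.cellRad l e) →
      ∀ (act : L → A → L), (∀ (x : D.Cell l) (a : A), act (p x) a = p (D.cellAct x a)) →
      Nontrivial L ∧
      (∀ N' : Set L,
        ((0 : L) ∈ N' ∧ (∀ x ∈ N', ∀ y ∈ N', x + y ∈ N') ∧
          (∀ (c : R), ∀ x ∈ N', c • x ∈ N') ∧ (∀ x ∈ N', ∀ a : A, act x a ∈ N')) →
        N' = {0} ∨ N' = Set.univ) ∧
      (∀ φ : L →ₗ[R] L, (∀ (y : L) (a : A), φ (act y a) = act (φ y) a) →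
        ∃ c : R, ∀ y : L, φ y = c • y)) := by
  classical
  obtain ⟨x₀, y₀, hxy⟩ := hform
  obtain ⟨jst, hjst⟩ := form_exists D l e x₀ y₀ hxy
  -- Part 2 first (used twice)
  have hmax : ∀ N : Set (D.Cell l), D.IsCellSubmodule N → N ≠ Set.univ →
      N ⊆ D.cellRad l e := by
    intro N hN hNuniv x hxN
    by_contra hx
    have : ∃ y, D.cellForm e x y ≠ 0 := by
      simpa [StandardlyBasedAlgebra.cellRad] using hx
    obtain ⟨y, hy⟩ := this
    obtain ⟨j', hj'⟩ := form_exists D l e x y hy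
    exact hNuniv (Set.eq_univ_of_forall (cell_gen D l N hN x hxN (e j') hj'))
  refine ⟨?_, hmax, ?_⟩
  · intro h
    have : x₀ ∈ D.cellRad l e := h ▸ Set.mem_univ x₀
    exact hxy (this y₀)
  · intro L _ _ p hsurj hker act hact
    have hx₀ : p x₀ ≠ 0 := fun h => hxy ((hker x₀).mp h y₀)
    set z : D.J l → D.Cell l := fun j₀ j => if j = j₀ then (1 : R) else 0 with hz
    have hzsum : ∀ w : D.Cell l, w = ∑ j₀ : D.J l, w j₀ • z j₀ := by
      intro w
      funext j
      simp [hz, Finset.sum_apply, Finset.sum_ite_eq', Finset.mem_univ]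
    refine ⟨⟨p x₀, 0, hx₀⟩, ?_, ?_⟩
    · rintro N' ⟨h0, hadd, hsmul, hactN⟩
      set N : Set (D.Cell l) := p ⁻¹' N' with hNdef
      have hNsub : D.IsCellSubmodule N := by
        refine ⟨?_, ?_, ?_, ?_⟩
        · show p 0 ∈ N'
          rw [map_zero]; exact h0
        · intro a ha b hb
          show p (a + b) ∈ N'
          rw [map_add]; exact hadd _ ha _ hb
        · intro c a ha
          show p (c • a) ∈ N'
          rw [map_smul]; exact hsmul _ _ ha
        · intro a ha b
          show p (D.cellAct a b) ∈ N'
          rw [← hact]; exact hactN _ ha _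
      by_cases hu : N = Set.univ
      · right
        apply Set.eq_univ_of_forall
        intro y
        obtain ⟨w, rfl⟩ := hsurj y
        have : w ∈ N := hu ▸ Set.mem_univ w
        exact this
      · left
        ext y
        simp only [Set.mem_singleton_iff]
        constructor
        · intro hy
          obtain ⟨w, rfl⟩ := hsurj y
          have hw : w ∈ N := hy
          have := hmax N hNsub hu hw
          exact (hker w).mpr this
        · rintro rfl
          exact h0
    · intro φ hφ
      obtain ⟨u, hu⟩ := hsurj (φ (p x₀))
      set d : R := ∑ j, x₀ j * D.f l j (e jst) with hd
      refine ⟨(∑ j, u j * D.f l j (e jst)) * d⁻¹, ?_⟩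
      intro y
      obtain ⟨w, rfl⟩ := hsurj y
      have key : ∀ j₀ : D.J l,
          φ (p (z j₀)) = ((∑ j, u j * D.f l j (e jst)) * d⁻¹) • p (z j₀) := by
        intro j₀
        have hact1 : D.cellAct x₀ (D.bas ⟨l, (e jst, j₀)⟩) = d • z j₀ := by
          rw [cellAct_bas]
          funext j'
          simp only [Pi.smul_apply, hz, smul_eq_mul, mul_ite, mul_one, mul_zero]
          rfl
        have hact2 : D.cellAct u (D.bas ⟨l, (e jst, j₀)⟩)
            = (∑ j, u j * D.f l j (e jst)) • z j₀ := by
          rw [cellAct_bas]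
          funext j'
          simp only [Pi.smul_apply, hz, smul_eq_mul, mul_ite, mul_one, mul_zero]
        have e1 : d • φ (p (z j₀)) = (∑ j, u j * D.f l j (e jst)) • p (z j₀) := by
          calc d • φ (p (z j₀)) = φ (p (d • z j₀)) := by rw [map_smul p, map_smul φ]
            _ = φ (p (D.cellAct x₀ (D.bas ⟨l, (e jst, j₀)⟩))) := by rw [hact1]
            _ = φ (act (p x₀) (D.bas ⟨l, (e jst, j₀)⟩)) := by rw [hact]
            _ = act (φ (p x₀)) (D.bas ⟨l, (e jst, j₀)⟩) := hφ _ _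
            _ = act (p u) (D.bas ⟨l, (e jst, j₀)⟩) := by rw [hu]
            _ = p (D.cellAct u (D.bas ⟨l, (e jst, j₀)⟩)) := hact _ _
            _ = p ((∑ j, u j * D.f l j (e jst)) • z j₀) := by rw [hact2]
            _ = (∑ j, u j * D.f l j (e jst)) • p (z j₀) := map_smul _ _ _
        have := congrArg (fun v => d⁻¹ • v) e1
        simpa [smul_smul, inv_mul_cancel₀ hjst, mul_comm] using this
      calc φ (p w) = φ (p (∑ j₀ : D.J l, w j₀ • z j₀)) := by rw [← hzsum w]
        _ = ∑ j₀ : D.J l, w j₀ • φ (p (z j₀)) := by rw [map_sum, map_sum]; simp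
        _ = ∑ j₀ : D.J l, w j₀ • (((∑ j, u j * D.f l j (e jst)) * d⁻¹) • p (z j₀)) := by
            simp only [key]
        _ = ((∑ j, u j * D.f l j (e jst)) * d⁻¹) • ∑ j₀ : D.J l, w j₀ • p (z j₀) := by
            rw [Finset.smul_sum]
            exact Finset.sum_congr rfl fun j₀ _ => smul_comm _ _ _
        _ = ((∑ j, u j * D.f l j (e jst)) * d⁻¹) • p w := by
            congr 1
            conv_rhs => rw [hzsum w]
            rw [map_sum]
            simp
end
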